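/- Let L be a reduced 1-compact compactly generated multiplicative lattice with Clique(Γᵐ(L)) < ∞. Then the set of maximal elements of {x* : x ∈ L, x* ≠ 1} is finite. -/

import Mathlib

variable {α : Type*}

/-- Iterated product `a^n` in a multiplicative lattice (with `a^0 = ⊤`). -/
def mpow [CompleteLattice α] (mul : α → α → α) (a : α) : ℕ → α
  | 0 => ⊤
  | n + 1 => mul a (mpow mul a n)

/-- `mul` makes the complete lattice `α` into a multiplicative lattice. -/
def IsMulLattice [CompleteLattice α] (mul : α → α → α) : Prop :=
  (∀ a b : α, mul a b = mul b a) ∧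
  (∀ a b c : α, mul (mul a b) c = mul a (mul b c)) ∧
  (∀ (a : α) (s : Set α), mul a (sSup s) = ⨆ b ∈ s, mul a b) ∧
  (∀ a b : α, mul a b ≤ a ⊓ b) ∧
  (∀ a : α, mul a ⊤ = a)

/-- The multiplicative lattice is reduced: the only nilpotent element is `⊥`. -/
def LatReduced [CompleteLattice α] (mul : α → α → α) : Prop :=
  ∀ (a : α) (n : ℕ), mpow mul a (n + 1) = ⊥ → a = ⊥

/-- `a* = sup {x | x·a = 0}`. -/
def starAnn [CompleteLattice α] (mul : α → α → α) (a : α) : α :=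
  sSup {x : α | mul x a = ⊥}

/-- A prime element of a multiplicative lattice. -/
def IsPrimeElt [CompleteLattice α] (mul : α → α → α) (p : α) : Prop :=
  p ≠ ⊤ ∧ ∀ a b : α, mul a b ≤ p → a ≤ p ∨ b ≤ p

/-- The zero-divisor graph `Γᵐ(L)` of a multiplicative lattice. -/
def zdg [CompleteLattice α] (mul : α → α → α) : SimpleGraph α where
  Adj a b := a ≠ b ∧ a ≠ ⊥ ∧ b ≠ ⊥ ∧ mul a b = ⊥ ∧ mul b a = ⊥
  symm := ⟨fun a b h => ⟨h.1.symm, h.2.2.1, h.2.1, h.2.2.2.2, h.2.2.2.1⟩⟩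
  loopless := ⟨fun a h => h.1 rfl⟩

/-- `Clique(Γᵐ(L)) < ∞`. -/
def CliqueBounded [CompleteLattice α] (mul : α → α → α) : Prop :=
  ∃ N : ℕ, ∀ s : Finset α, (zdg mul).IsClique ↑s → s.card ≤ N

theorem maximal_annihilators_finite [CompleteLattice α] [IsCompactlyGenerated α]
    (mul : α → α → α) (hL : IsMulLattice mul) (hred : LatReduced mul)
    (htop : IsCompactElement (⊤ : α))
    (hclique : CliqueBounded mul) :
    {p : α | (∃ x : α, p = starAnn mul x) ∧ p ≠ ⊤ ∧
      ∀ a : α, starAnn mul a ≠ ⊤ → p ≤ starAnn mul a → p = starAnn mul a}.Finite := by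
  obtain ⟨hcomm, hassoc, hdist, hinf', htop'⟩ := hL
  obtain ⟨N, hN⟩ := hclique
  set S := {p : α | (∃ x : α, p = starAnn mul x) ∧ p ≠ ⊤ ∧
      ∀ a : α, starAnn mul a ≠ ⊤ → p ≤ starAnn mul a → p = starAnn mul a} with hS
  have mul_bot : ∀ a : α, mul a ⊥ = ⊥ := by
    intro a
    have := hdist a ∅
    simpa using this
  have bot_mul : ∀ a : α, mul ⊥ a = ⊥ := fun a => by rw [hcomm]; exact mul_bot a
  have mul_starAnn : ∀ a : α, mul a (starAnn mul a) = ⊥ := by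
    intro a
    rw [starAnn, hdist]
    refine le_bot_iff.mp (iSup₂_le fun b hb => ?_)
    rw [hcomm]; exact le_of_eq hb
  have star_top : ∀ a : α, starAnn mul a = ⊤ → a = ⊥ := fun a h => by
    have := mul_starAnn a; rw [h, htop'] at this; exact this
  have star_bot : starAnn mul (⊥ : α) = ⊤ := by
    refine top_le_iff.mp (le_sSup ?_)
    exact mul_bot ⊤
  -- representative function
  classical
  set f : α → α := fun p => if h : ∃ x : α, p = starAnn mul x then h.choose else ⊥ with hf
  have hfp : ∀ p ∈ S, p = starAnn mul (f p) := by
    intro p hp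
    have h := hp.1
    simp only [hf, dif_pos h]
    exact h.choose_spec
  have fne : ∀ p ∈ S, f p ≠ ⊥ := by
    intro p hp hbot
    have := hfp p hp
    rw [hbot, star_bot] at this
    exact hp.2.1 this
  have key : ∀ p ∈ S, ∀ q ∈ S, p ≠ q → mul (f p) (f q) = ⊥ := by
    intro p hp q hq hne
    by_contra hxy
    set x := f p
    set y := f q
    have hpx : p = starAnn mul x := hfp p hp
    have hqy : q = starAnn mul y := hfp q hq
    have h1 : starAnn mul x ≤ starAnn mul (mul x y) := by
      refine sSup_le_sSup fun z hz => ?_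
      show mul z (mul x y) = ⊥
      rw [← hassoc, hz, bot_mul]
    have h2 : starAnn mul y ≤ starAnn mul (mul x y) := by
      refine sSup_le_sSup fun z hz => ?_
      show mul z (mul x y) = ⊥
      rw [hcomm x y, ← hassoc, hz, bot_mul]
    have hne' : starAnn mul (mul x y) ≠ ⊤ := fun h => hxy (star_top _ h)
    have e1 : p = starAnn mul (mul x y) := hp.2.2 _ hne' (hpx ▸ h1)
    have e2 : q = starAnn mul (mul x y) := hq.2.2 _ hne' (hqy ▸ h2)
    exact hne (e1.trans e2.symm)
  have finj : Set.InjOn f S := by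
    intro p hp q hq h
    rw [hfp p hp, hfp q hq, h]
  by_contra hinf
  have hinf2 : S.Infinite := hinf
  obtain ⟨t, htS, htcard⟩ := hinf2.exists_subset_card_eq (N + 1)
  have hclq : (zdg mul).IsClique ↑(t.image f) := by
    intro a ha b hb hab
    simp only [Finset.coe_image, Set.mem_image, Finset.mem_coe] at ha hb
    obtain ⟨p, hp, rfl⟩ := ha
    obtain ⟨q, hq, rfl⟩ := hb
    have hpS := htS hp
    have hqS := htS hq
    have hpq : p ≠ q := fun h => hab (by rw [h])
    exact ⟨hab, fne p hpS, fne q hqS, key p hpS q hqS hpq, key q hqS p hpS hpq.symm⟩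
  have hcard : (t.image f).card = N + 1 := by
    rw [Finset.card_image_of_injOn (finj.mono htS), htcard]
  have := hN _ hclq
  omega
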